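/- Let n≥1 be an integer, let A, B ∈ ℂ with A ≠ 0, and let λ_1,…,λ_n ∈ ℂ satisfy λ_k² ≠ λ_ℓ² for all k ≠ ℓ and B² + λ_j² ≠ 0 for all j. Then Σ_{ε∈{±1}^n} Π_{1≤k<ℓ≤n} (1 + i/(ε_k λ_k + ε_ℓ λ_ℓ)) · Π_{j=1}^n (ε_j + i λ_j/A)/(B − i ε_j λ_j) = (2i/A)^n · Π_{j=0}^{n−1}(A + B − j) · Π_{j=1}^n λ_j/(B² + λ_j²). -/

import Mathlib

open Complex Finset

/-- The sign `±1 ∈ ℂ` associated to a boolean. -/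
def pmSign (b : Bool) : ℂ := if b then 1 else -1

open Polynomial

lemma pmSign_sq (b : Bool) : pmSign b * pmSign b = 1 := by cases b <;> simp [pmSign]

lemma pmSign_not (b : Bool) : pmSign (!b) = -pmSign b := by cases b <;> simp [pmSign]

/-- Splitting the product over ordered pairs in `Fin (n+1)` at an index `m`. -/
lemma prod_pairs_succAbove {n : ℕ} (m : Fin (n + 1)) (g : Fin (n + 1) → Fin (n + 1) → ℂ)
    (hg : ∀ a b, g a b = g b a) :
    ∏ p ∈ Finset.univ.filter (fun p : Fin (n+1) × Fin (n+1) => p.1 < p.2), g p.1 p.2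
    = (∏ p ∈ Finset.univ.filter (fun p : Fin n × Fin n => p.1 < p.2),
        g (m.succAbove p.1) (m.succAbove p.2)) * ∏ k : Fin n, g m (m.succAbove k) := by
  have main : ∏ p ∈ Finset.univ.filter (fun p : Fin (n+1) × Fin (n+1) => p.1 < p.2), g p.1 p.2
      = ∏ x ∈ (Finset.univ.filter (fun p : Fin n × Fin n => p.1 < p.2)).disjSum Finset.univ,
          Sum.elim (fun p : Fin n × Fin n => g (m.succAbove p.1) (m.succAbove p.2))
            (fun k : Fin n => g m (m.succAbove k)) x := by
    refine (Finset.prod_bij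
      (i := fun (x : (Fin n × Fin n) ⊕ Fin n) _ => Sum.elim
        (fun p => (m.succAbove p.1, m.succAbove p.2))
        (fun k => if m < m.succAbove k then (m, m.succAbove k) else (m.succAbove k, m)) x)
      ?_ ?_ ?_ ?_).symm
    · rintro (p | k) hx
      · simp only [Finset.mem_disjSum] at hx
        simp only [Sum.elim_inl, Finset.mem_filter, Finset.mem_univ, true_and]
        rcases hx with ⟨a, ha, h⟩ | ⟨a, ha, h⟩
        · cases h; exact (Fin.succAbove_lt_succAbove_iff).mpr (Finset.mem_filter.mp ha).2
        · exact absurd h (by simp)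
      · simp only [Sum.elim_inr]
        split_ifs with h
        · simp [h]
        · have : m.succAbove k < m := lt_of_le_of_ne (not_lt.mp h) (Fin.succAbove_ne m k)
          simp [this]
    · rintro (p | k) hx (q | l) hy h <;> simp only [Sum.elim_inl, Sum.elim_inr] at h
      · have h1 := congrArg Prod.fst h
        have h2 := congrArg Prod.snd h
        simp only at h1 h2
        have e1 := Fin.succAbove_right_injective (p := m) h1
        have e2 := Fin.succAbove_right_injective (p := m) h2
        simp [Prod.ext_iff, e1, e2]
      · exfalso
        split_ifs at h with hc
        · exact Fin.succAbove_ne m p.1 (congrArg Prod.fst h)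
        · exact Fin.succAbove_ne m p.2 (congrArg Prod.snd h)
      · exfalso
        split_ifs at h with hc
        · exact Fin.succAbove_ne m q.1 (congrArg Prod.fst h).symm
        · exact Fin.succAbove_ne m q.2 (congrArg Prod.snd h).symm
      · split_ifs at h with h1 h2 h2
        · have := Fin.succAbove_right_injective (p := m) (congrArg Prod.snd h)
          simp [this]
        · exact absurd (congrArg Prod.fst h) (Fin.ne_succAbove m l)
        · exact absurd (congrArg Prod.fst h).symm (Fin.ne_succAbove m k)
        · have := Fin.succAbove_right_injective (p := m) (congrArg Prod.fst h)
          simp [this]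
    · rintro ⟨a, b⟩ hab
      simp only [Finset.mem_filter, Finset.mem_univ, true_and] at hab
      by_cases ha : a = m
      · subst ha
        obtain ⟨k, hk⟩ := Fin.exists_succAbove_eq (x := b) (y := a) (Ne.symm (ne_of_lt hab))
        refine ⟨Sum.inr k, by simp, ?_⟩
        simp only [Sum.elim_inr, hk]
        rw [if_pos (hk ▸ hab)]
      · by_cases hb : b = m
        · subst hb
          obtain ⟨k, hk⟩ := Fin.exists_succAbove_eq (x := a) (y := b) ha
          refine ⟨Sum.inr k, by simp, ?_⟩
          simp only [Sum.elim_inr, hk]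
          rw [if_neg (not_lt.mpr hab.le)]
        · obtain ⟨k1, hk1⟩ := Fin.exists_succAbove_eq (x := a) (y := m) ha
          obtain ⟨k2, hk2⟩ := Fin.exists_succAbove_eq (x := b) (y := m) hb
          refine ⟨Sum.inl (k1, k2), ?_, by simp [hk1, hk2]⟩
          simp only [Finset.inl_mem_disjSum, Finset.mem_filter, Finset.mem_univ, true_and]
          rw [← Fin.succAbove_lt_succAbove_iff (p := m), hk1, hk2]; exact hab
    · rintro (p | k) hx
      · simp
      · simp only [Sum.elim_inr]
        split_ifs with h
        · simp
        · simp [hg m (m.succAbove k)]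
  rw [main, Finset.prod_disjSum]
  simp

noncomputable def pairProd (n : ℕ) (lam : Fin n → ℂ) (ε : Fin n → Bool) : ℂ :=
  ∏ p ∈ Finset.univ.filter (fun p : Fin n × Fin n => p.1 < p.2),
    (1 + I / (pmSign (ε p.1) * lam p.1 + pmSign (ε p.2) * lam p.2))

noncomputable def Ppoly (n : ℕ) (A : ℂ) (lam : Fin n → ℂ) : Polynomial ℂ :=
  ∑ ε : Fin n → Bool, Polynomial.C (pairProd n lam ε) *
    ∏ j : Fin n, (Polynomial.C (pmSign (ε j) + I * lam j / A) *
      (Polynomial.X + Polynomial.C (I * pmSign (ε j) * lam j)))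

noncomputable def Qpoly (n : ℕ) (A : ℂ) (lam : Fin n → ℂ) : Polynomial ℂ :=
  Polynomial.C ((2 * I / A) ^ n * ∏ j : Fin n, lam j) *
    ∏ j ∈ Finset.range n, (Polynomial.X + Polynomial.C (A - (j : ℂ)))

lemma Ppoly_natDegree_le (n : ℕ) (A : ℂ) (lam : Fin n → ℂ) :
    (Ppoly n A lam).natDegree ≤ n := by
  refine natDegree_sum_le_of_forall_le _ _ fun ε _ => (natDegree_C_mul_le _ _).trans ?_
  refine (natDegree_prod_le _ _).trans ?_
  refine le_trans (Finset.sum_le_card_nsmul _ _ 1 fun j _ =>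
    (natDegree_C_mul_le _ _).trans (natDegree_X_add_C _).le) (by simp)

lemma Qpoly_natDegree_le (n : ℕ) (A : ℂ) (lam : Fin n → ℂ) :
    (Qpoly n A lam).natDegree ≤ n := by
  refine (natDegree_C_mul_le _ _).trans ((natDegree_prod_le _ _).trans ?_)
  refine le_trans (Finset.sum_le_card_nsmul _ _ 1 fun j _ =>
    (natDegree_X_add_C _).le) (by simp)

lemma Ppoly_eval (n : ℕ) (A : ℂ) (lam : Fin n → ℂ) (x : ℂ) :
    (Ppoly n A lam).eval x = ∑ ε : Fin n → Bool, pairProd n lam ε *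
      ∏ j : Fin n, ((pmSign (ε j) + I * lam j / A) * (x + I * pmSign (ε j) * lam j)) := by
  rw [Ppoly, eval_finset_sum]
  exact Finset.sum_congr rfl fun ε _ => by rw [eval_mul, eval_C, eval_prod]; simp

lemma Qpoly_eval (n : ℕ) (A : ℂ) (lam : Fin n → ℂ) (x : ℂ) :
    (Qpoly n A lam).eval x = (2 * I / A) ^ n * (∏ j : Fin n, lam j) *
      ∏ j ∈ Finset.range n, (x + (A - (j : ℂ))) := by
  rw [Qpoly, eval_mul, eval_C, eval_prod]; simp

lemma sum_bool_pick (η : Bool) (h : Bool → ℂ) : ∑ b, h b = h η + h (!η) := by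
  cases η <;> simp [Fintype.sum_bool, add_comm]

lemma poly_key (n : ℕ) (A : ℂ) (hA : A ≠ 0) : ∀ (lam : Fin n → ℂ),
    (∀ k l, k ≠ l → lam k ^ 2 ≠ lam l ^ 2) → (∀ j, lam j ≠ 0) →
    Ppoly n A lam = Qpoly n A lam := by
  induction n with
  | zero =>
    intro lam _ _
    rw [Ppoly, Qpoly]
    simp [pairProd]
  | succ n IH =>
    intro lam hll h0
    have hinj : Function.Injective (fun x : Fin (n+1) × Bool => I * pmSign x.2 * lam x.1) := by
      rintro ⟨j, b⟩ ⟨k, c⟩ h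
      simp only at h
      have e1 : ∀ (j : Fin (n+1)) (b : Bool),
          (I * pmSign b * lam j) * (I * pmSign b * lam j) = -(lam j ^ 2) := by
        intro j b
        calc (I * pmSign b * lam j) * (I * pmSign b * lam j)
            = (I * I) * (pmSign b * pmSign b) * (lam j * lam j) := by ring
          _ = -(lam j ^ 2) := by rw [pmSign_sq, I_mul_I]; ring
      have hsq : lam j ^ 2 = lam k ^ 2 := by
        have := congrArg (fun z : ℂ => z * z) h
        rw [e1, e1] at this
        exact neg_injective this
      have hjk : j = k := by
        by_contra hjk
        exact hll j k hjk hsq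
      subst hjk
      have hbc : pmSign b = pmSign c := by
        have h' := mul_right_cancel₀ (h0 j) h
        exact mul_left_cancel₀ I_ne_zero h'
      have : b = c := by
        cases b <;> cases c <;> simp [pmSign] at hbc ⊢ <;> norm_num at hbc
      rw [this]
    have key : ∀ (m : Fin (n+1)) (η : Bool),
        (Ppoly (n+1) A lam).eval (I * pmSign η * lam m)
          = (Qpoly (n+1) A lam).eval (I * pmSign η * lam m) := by
      intro m η
      have hss : pmSign η * pmSign η = 1 := pmSign_sq η
      set s : ℂ := pmSign η with hs
      set p0 : ℂ := I * s * lam m with hp0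
      have hll' : ∀ k l : Fin n, k ≠ l →
          lam (m.succAbove k) ^ 2 ≠ lam (m.succAbove l) ^ 2 := fun k l hkl =>
        hll _ _ (fun h => hkl (Fin.succAbove_right_injective h))
      have h0' : ∀ k : Fin n, lam (m.succAbove k) ≠ 0 := fun k => h0 _
      have hIH := IH (fun k => lam (m.succAbove k)) hll' h0'
      rw [Ppoly_eval, Qpoly_eval]
      rw [← Equiv.sum_comp (Fin.insertNthEquiv (fun _ : Fin (n+1) => Bool) m)]
      simp only [Fin.insertNthEquiv, Equiv.coe_fn_mk]
      rw [Fintype.sum_prod_type, sum_bool_pick η]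
      simp only [Fin.insertNthEquiv, Equiv.coe_fn_mk]
      have hzero : (∑ ε' : Fin n → Bool,
          pairProd (n+1) lam (Fin.insertNth (α := fun _ => Bool) m (!η) ε') *
            ∏ j : Fin (n+1), ((pmSign (Fin.insertNth (α := fun _ => Bool) m (!η) ε' j) + I * lam j / A) *
              (p0 + I * pmSign (Fin.insertNth (α := fun _ => Bool) m (!η) ε' j) * lam j))) = 0 := by
        refine Finset.sum_eq_zero fun ε' _ => ?_
        have hfac : (pmSign (Fin.insertNth (α := fun _ => Bool) m (!η) ε' m) + I * lam m / A) *
            (p0 + I * pmSign (Fin.insertNth (α := fun _ => Bool) m (!η) ε' m) * lam m) = 0 := by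
          rw [Fin.insertNth_apply_same, pmSign_not, ← hs, hp0]
          ring
        rw [Finset.prod_eq_zero (Finset.mem_univ m) hfac, mul_zero]
      have hmain : (∑ ε' : Fin n → Bool,
          pairProd (n+1) lam (Fin.insertNth (α := fun _ => Bool) m η ε') *
            ∏ j : Fin (n+1), ((pmSign (Fin.insertNth (α := fun _ => Bool) m η ε' j) + I * lam j / A) *
              (p0 + I * pmSign (Fin.insertNth (α := fun _ => Bool) m η ε' j) * lam j)))
          = ((s + I * lam m / A) * (p0 + I * s * lam m)) *
            (Ppoly n A (fun k => lam (m.succAbove k))).eval (p0 - 1) := by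
        rw [Ppoly_eval, Finset.mul_sum]
        refine Finset.sum_congr rfl fun ε' _ => ?_
        simp only [pairProd]
        rw [prod_pairs_succAbove m (fun a b =>
          1 + I / (pmSign (Fin.insertNth (α := fun _ => Bool) m η ε' a) * lam a
            + pmSign (Fin.insertNth (α := fun _ => Bool) m η ε' b) * lam b))
          (fun a b => by beta_reduce; rw [add_comm (pmSign (Fin.insertNth (α := fun _ => Bool) m η ε' a) * lam a)])]
        rw [Fin.prod_univ_succAbove (fun j =>
          (pmSign (Fin.insertNth (α := fun _ => Bool) m η ε' j) + I * lam j / A) *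
          (p0 + I * pmSign (Fin.insertNth (α := fun _ => Bool) m η ε' j) * lam j)) m]
        simp only [Fin.insertNth_apply_same, Fin.insertNth_apply_succAbove]
        rw [show ∀ P G Sm S' : ℂ, (P * G) * (Sm * S') = Sm * (P * (G * S'))
          from fun P G Sm S' => by ring]
        rw [← hs, ← Finset.prod_mul_distrib]
        congr 1
        congr 1
        refine Finset.prod_congr rfl fun k _ => ?_
        have hd : s * lam m + pmSign (ε' k) * lam (m.succAbove k) ≠ 0 := by
          intro hd0
          apply hll m (m.succAbove k) (Fin.ne_succAbove m k)
          linear_combination (s * lam m - pmSign (ε' k) * lam (m.succAbove k)) * hd0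
            - lam m ^ 2 * hss + lam (m.succAbove k) ^ 2 * pmSign_sq (ε' k)
        have hIdd : p0 + I * pmSign (ε' k) * lam (m.succAbove k)
            = I * (s * lam m + pmSign (ε' k) * lam (m.succAbove k)) := by rw [hp0]; ring
        rw [hIdd]
        field_simp
        linear_combination (-(pmSign (ε' k) * A + I * lam (m.succAbove k))) * hp0
          + (pmSign (ε' k) * A + I * lam (m.succAbove k)) * Complex.I_sq
      rw [hzero, hmain, add_zero, hIH, Qpoly_eval]
      have hsite : (s + I * lam m / A) * (p0 + I * s * lam m)
          = 2 * I / A * lam m * (p0 + A) := by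
        rw [hp0]
        field_simp
        linear_combination (2 * A * lam m) * hss
      rw [hsite]
      rw [Fin.prod_univ_succAbove (fun j => lam j) m, Finset.prod_range_succ']
      rw [Finset.prod_congr rfl (fun j (hj : j ∈ Finset.range n) =>
        (show p0 + (A - ((j + 1 : ℕ) : ℂ)) = p0 - 1 + (A - (j : ℂ)) by push_cast; ring))]
      push_cast
      ring
    have hsub : Ppoly (n+1) A lam - Qpoly (n+1) A lam = 0 := by
      refine Polynomial.eq_zero_of_natDegree_lt_card_of_eval_eq_zero _ hinj (fun x => ?_) ?_
      · rw [eval_sub, key x.1 x.2, sub_self]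
      · refine lt_of_le_of_lt (natDegree_sub_le _ _) ?_
        have h1 := Ppoly_natDegree_le (n+1) A lam
        have h2 := Qpoly_natDegree_le (n+1) A lam
        have hcard : Fintype.card (Fin (n+1) × Bool) = (n+1) * 2 := by simp
        rw [hcard]
        omega
    exact sub_eq_zero.mp hsub

/-- **Symmetrization identity for the overlap** (Lemma 2.2 / Eq. (B.9) of the paper).
For `n ≥ 1`, `A ≠ 0`, `λ_k² ≠ λ_ℓ²` for `k ≠ ℓ` and `B² + λ_j² ≠ 0`:
`Σ_{ε∈{±1}^n} Π_{k<ℓ} (1 + i/(ε_k λ_k + ε_ℓ λ_ℓ)) · Π_j (ε_j + iλ_j/A)/(B − iε_jλ_j)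
  = (2i/A)^n · Π_{j=0}^{n−1}(A+B−j) · Π_j λ_j/(B²+λ_j²)`. -/
theorem overlap_symmetrization_identity (n : ℕ) (hn : 1 ≤ n) (A B : ℂ) (hA : A ≠ 0)
    (lam : Fin n → ℂ)
    (hll : ∀ k l, k ≠ l → lam k ^ 2 ≠ lam l ^ 2)
    (hB : ∀ j, B ^ 2 + lam j ^ 2 ≠ 0) :
    ∑ ε : Fin n → Bool,
      (∏ p ∈ Finset.univ.filter (fun p : Fin n × Fin n => p.1 < p.2),
        (1 + I / (pmSign (ε p.1) * lam p.1 + pmSign (ε p.2) * lam p.2))) *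
      ∏ j : Fin n, (pmSign (ε j) + I * lam j / A) / (B - I * pmSign (ε j) * lam j)
    = (2 * I / A) ^ n * (∏ j ∈ Finset.range n, (A + B - (j : ℂ))) *
        ∏ j : Fin n, lam j / (B ^ 2 + lam j ^ 2) := by
  classical
  by_cases hz : ∀ j, lam j ≠ 0
  · have key := congrArg (Polynomial.eval B) (poly_key n A hA lam hll hz)
    rw [Ppoly_eval, Qpoly_eval] at key
    have hBfac : ∀ (j : Fin n) (b : Bool),
        (B - I * pmSign b * lam j) * (B + I * pmSign b * lam j) = B ^ 2 + lam j ^ 2 := by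
      intro j b
      linear_combination (-(I ^ 2 * lam j ^ 2)) * pmSign_sq b + (-(lam j ^ 2)) * Complex.I_sq
    have hBne : ∀ (j : Fin n) (b : Bool), B - I * pmSign b * lam j ≠ 0 := fun j b h =>
      hB j (by rw [← hBfac j b, h, zero_mul])
    have hD : (∏ j : Fin n, (B ^ 2 + lam j ^ 2)) ≠ 0 :=
      Finset.prod_ne_zero_iff.mpr fun j _ => hB j
    have hterm : ∀ (ε : Fin n → Bool),
        (∏ j : Fin n, (pmSign (ε j) + I * lam j / A) / (B - I * pmSign (ε j) * lam j))
        = (∏ j : Fin n, ((pmSign (ε j) + I * lam j / A) * (B + I * pmSign (ε j) * lam j)))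
            / (∏ j : Fin n, (B ^ 2 + lam j ^ 2)) := by
      intro ε
      rw [← Finset.prod_div_distrib]
      refine Finset.prod_congr rfl fun j _ => ?_
      rw [div_eq_div_iff (hBne j (ε j)) (hB j)]
      linear_combination (-(pmSign (ε j) + I * lam j / A)) * hBfac j (ε j)
    show (∑ ε : Fin n → Bool, pairProd n lam ε *
        ∏ j : Fin n, (pmSign (ε j) + I * lam j / A) / (B - I * pmSign (ε j) * lam j)) = _
    calc ∑ ε : Fin n → Bool, pairProd n lam ε *
          ∏ j : Fin n, (pmSign (ε j) + I * lam j / A) / (B - I * pmSign (ε j) * lam j)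
        = ∑ ε : Fin n → Bool, (pairProd n lam ε *
            ∏ j : Fin n, ((pmSign (ε j) + I * lam j / A) * (B + I * pmSign (ε j) * lam j)))
              / (∏ j : Fin n, (B ^ 2 + lam j ^ 2)) :=
          Finset.sum_congr rfl fun ε _ => by rw [hterm ε, mul_div_assoc]
      _ = (∑ ε : Fin n → Bool, pairProd n lam ε *
            ∏ j : Fin n, ((pmSign (ε j) + I * lam j / A) * (B + I * pmSign (ε j) * lam j)))
              / (∏ j : Fin n, (B ^ 2 + lam j ^ 2)) := by rw [Finset.sum_div]
      _ = ((2 * I / A) ^ n * (∏ j : Fin n, lam j) * ∏ j ∈ Finset.range n, (B + (A - (j : ℂ))))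
              / (∏ j : Fin n, (B ^ 2 + lam j ^ 2)) := by rw [key]
      _ = (2 * I / A) ^ n * (∏ j ∈ Finset.range n, (A + B - (j : ℂ))) *
            ∏ j : Fin n, lam j / (B ^ 2 + lam j ^ 2) := by
          rw [Finset.prod_div_distrib,
            show (∏ j ∈ Finset.range n, (B + (A - (j : ℂ))))
              = ∏ j ∈ Finset.range n, (A + B - (j : ℂ)) from
              Finset.prod_congr rfl fun j _ => by ring]
          field_simp
  · push_neg at hz
    obtain ⟨m, hm⟩ := hz
    obtain ⟨n', rfl⟩ : ∃ k, n = k + 1 := ⟨n - 1, by omega⟩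
    have hR : (2 * I / A) ^ (n' + 1) * (∏ j ∈ Finset.range (n' + 1), (A + B - (j : ℂ))) *
        ∏ j : Fin (n' + 1), lam j / (B ^ 2 + lam j ^ 2) = 0 := by
      rw [Finset.prod_eq_zero (Finset.mem_univ m) (by rw [hm, zero_div]), mul_zero]
    rw [hR]
    rw [← Equiv.sum_comp (Fin.insertNthEquiv (fun _ : Fin (n' + 1) => Bool) m)]
    simp only [Fin.insertNthEquiv, Equiv.coe_fn_mk]
    rw [Fintype.sum_prod_type, Finset.sum_comm]
    refine Finset.sum_eq_zero fun ε' _ => ?_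
    rw [Fintype.sum_bool]
    have hval : ∀ (b c : Bool) (j : Fin (n' + 1)),
        pmSign (Fin.insertNth (α := fun _ => Bool) m b ε' j) * lam j
          = pmSign (Fin.insertNth (α := fun _ => Bool) m c ε' j) * lam j := by
      intro b c j
      rcases eq_or_ne j m with rfl | hj
      · rw [Fin.insertNth_apply_same, Fin.insertNth_apply_same, hm, mul_zero, mul_zero]
      · obtain ⟨k, rfl⟩ := Fin.exists_succAbove_eq hj
        rw [Fin.insertNth_apply_succAbove, Fin.insertNth_apply_succAbove]
    have hpair : ∀ b : Bool,
        (∏ p ∈ Finset.univ.filter (fun p : Fin (n' + 1) × Fin (n' + 1) => p.1 < p.2),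
          (1 + I / (pmSign (Fin.insertNth (α := fun _ => Bool) m b ε' p.1) * lam p.1
            + pmSign (Fin.insertNth (α := fun _ => Bool) m b ε' p.2) * lam p.2)))
        = ∏ p ∈ Finset.univ.filter (fun p : Fin (n' + 1) × Fin (n' + 1) => p.1 < p.2),
          (1 + I / (pmSign (Fin.insertNth (α := fun _ => Bool) m true ε' p.1) * lam p.1
            + pmSign (Fin.insertNth (α := fun _ => Bool) m true ε' p.2) * lam p.2)) := by
      intro b
      exact Finset.prod_congr rfl fun p _ => by rw [hval b true p.1, hval b true p.2]
    have hsite : ∀ b : Bool,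
        (∏ j : Fin (n' + 1), (pmSign (Fin.insertNth (α := fun _ => Bool) m b ε' j) + I * lam j / A)
          / (B - I * pmSign (Fin.insertNth (α := fun _ => Bool) m b ε' j) * lam j))
        = (pmSign b / B) * ∏ k : Fin n', (pmSign (ε' k) + I * lam (m.succAbove k) / A)
          / (B - I * pmSign (ε' k) * lam (m.succAbove k)) := by
      intro b
      rw [Fin.prod_univ_succAbove (fun j =>
        (pmSign (Fin.insertNth (α := fun _ => Bool) m b ε' j) + I * lam j / A)
          / (B - I * pmSign (Fin.insertNth (α := fun _ => Bool) m b ε' j) * lam j)) m]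
      simp only [Fin.insertNth_apply_same, Fin.insertNth_apply_succAbove]
      rw [hm]
      congr 1
      field_simp
      rw [mul_zero, mul_zero, add_zero, sub_zero]
    rw [hpair true, hpair false, hsite true, hsite false]
    have : pmSign true / B = -(pmSign false / B) := by simp [pmSign]; ring
    rw [this]
    ring
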